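/- arXiv:1506.04448 — 2 statements merged into one kernel-verified Lean document; each statement's English description precedes it below -/
import Mathlib

section
/- For vectors s_T, s_1, s_2, s_3 ∈ ℂᵇ, ⟨s_T, s_1 * s_2 * s_3⟩ = ⟨F⁻¹(F(s_T) ∘ conj(F(s_1)) ∘ conj(F(s_2))), s_3⟩, where * denotes circular convolution, ∘ element-wise product, F the discrete Fourier transform, and ⟨·,·⟩ the complex inner product Σ_i u_i conj(v_i). -/
open ComplexConjugate

/-- Discrete Fourier transform on `ZMod b`. -/
noncomputable def dft (b : ℕ) [NeZero b] (x : ZMod b → ℂ) (k : ZMod b) : ℂ :=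
  ∑ j : ZMod b, x j * Complex.exp (-2 * Real.pi * Complex.I * (j.val * k.val) / b)

/-- Inverse discrete Fourier transform on `ZMod b`. -/
noncomputable def idft (b : ℕ) [NeZero b] (x : ZMod b → ℂ) (j : ZMod b) : ℂ :=
  (∑ k : ZMod b, x k * Complex.exp (2 * Real.pi * Complex.I * (j.val * k.val) / b)) / b

/-- Circular convolution over `ZMod b`. -/
noncomputable def cconv (b : ℕ) [NeZero b] (x y : ZMod b → ℂ) (t : ZMod b) : ℂ :=
  ∑ i : ZMod b, x i * y (t - i)

noncomputable def Ee (b : ℕ) (n : ℤ) : ℂ := Complex.exp (2 * Real.pi * Complex.I * n / b)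

lemma Ee_add (b : ℕ) (m n : ℤ) : Ee b m * Ee b n = Ee b (m + n) := by
  rw [Ee, Ee, Ee, ← Complex.exp_add]
  congr 1
  push_cast
  ring

lemma conj_Ee (b : ℕ) (n : ℤ) : conj (Ee b n) = Ee b (-n) := by
  rw [Ee, Ee, ← Complex.exp_conj]
  congr 1
  simp only [map_div₀, map_mul, map_neg, Complex.conj_I, map_ofNat, Complex.conj_ofReal,
    map_intCast, map_natCast]
  push_cast
  ring

lemma exp_neg_eq (b : ℕ) (x y : ℕ) :
    Complex.exp (-2 * Real.pi * Complex.I * ((x:ℂ) * y) / b) = Ee b (-(x*y)) := by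
  rw [Ee]; congr 1; push_cast; ring

lemma exp_pos_eq (b : ℕ) (x y : ℕ) :
    Complex.exp (2 * Real.pi * Complex.I * ((x:ℂ) * y) / b) = Ee b (x*y) := by
  rw [Ee]; congr 1; push_cast; ring

lemma Ee_pow (b : ℕ) (m : ℤ) (n : ℕ) : Ee b (m * n) = (Ee b m) ^ n := by
  rw [Ee, Ee, ← Complex.exp_nat_mul]
  congr 1
  push_cast
  ring

lemma ortho (b : ℕ) [NeZero b] (m : ℤ) :
    ∑ k : ZMod b, Ee b (m * k.val) = if (m : ZMod b) = 0 then (b:ℂ) else 0 := by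
  have hb : (b:ℂ) ≠ 0 := Nat.cast_ne_zero.2 (NeZero.ne b)
  have hsum : ∑ k : ZMod b, Ee b (m * k.val) = ∑ i ∈ Finset.range b, (Ee b m) ^ i := by
    simp_rw [Ee_pow]
    refine Finset.sum_nbij' (fun k => k.val) (fun i => (i : ZMod b)) ?_ ?_ ?_ ?_ ?_
    · intro a _; exact Finset.mem_range.2 (ZMod.val_lt a)
    · intro a _; exact Finset.mem_univ _
    · intro a _; simp [ZMod.natCast_val, ZMod.cast_id]
    · intro i hi; exact ZMod.val_cast_of_lt (Finset.mem_range.1 hi)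
    · intro a _; rfl
  rw [hsum]
  have hzb : (Ee b m) ^ b = 1 := by
    rw [← Ee_pow, Ee]
    have : (2 * (Real.pi:ℂ) * Complex.I * ((m * b : ℤ):ℂ) / b) = (m:ℂ) * (2 * Real.pi * Complex.I) := by
      push_cast; field_simp
    rw [this]
    exact Complex.exp_int_mul_two_pi_mul_I m
  by_cases hm : (m : ZMod b) = 0
  · obtain ⟨c, rfl⟩ := (ZMod.intCast_zmod_eq_zero_iff_dvd m b).1 hm
    have h1 : Ee b ((b:ℤ) * c) = 1 := by
      rw [Ee]
      have : (2 * (Real.pi:ℂ) * Complex.I * (((b:ℤ) * c : ℤ):ℂ) / b) = (c:ℂ) * (2 * Real.pi * Complex.I) := by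
        push_cast; field_simp
      rw [this]
      exact Complex.exp_int_mul_two_pi_mul_I c
    simp [h1, hm]
  · have hne : Ee b m ≠ 1 := by
      intro h
      apply hm
      have hprim := Complex.isPrimitiveRoot_exp b (NeZero.ne b)
      have : Complex.exp (2 * Real.pi * Complex.I / b) ^ m = 1 := by
        rw [← h, Ee]
        rw [← Complex.exp_int_mul]
        congr 1
        ring
      have hdvd := (hprim.zpow_eq_one_iff_dvd m).1 this
      exact (ZMod.intCast_zmod_eq_zero_iff_dvd m b).2 hdvd
    rw [if_neg hm, geom_sum_eq hne, hzb]
    simp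

lemma dft_eq (b : ℕ) [NeZero b] (f : ZMod b → ℂ) (k : ZMod b) :
    dft b f k = ∑ a : ZMod b, f a * Ee b (-((a.val : ℤ) * k.val)) := by
  rw [dft]
  refine Finset.sum_congr rfl fun a _ => ?_
  rw [exp_neg_eq]

lemma conj_dft_eq (b : ℕ) [NeZero b] (f : ZMod b → ℂ) (k : ZMod b) :
    conj (dft b f k) = ∑ a : ZMod b, conj (f a) * Ee b ((a.val : ℤ) * k.val) := by
  rw [dft_eq, map_sum]
  refine Finset.sum_congr rfl fun a _ => ?_
  rw [map_mul, conj_Ee, neg_neg]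

lemma idft_eq (b : ℕ) [NeZero b] (sT s1 s2 : ZMod b → ℂ) (t : ZMod b) :
    idft b (fun k => dft b sT k * conj (dft b s1 k) * conj (dft b s2 k)) t
      = ∑ u : ZMod b, ∑ v : ZMod b, sT (t + u + v) * conj (s1 u) * conj (s2 v) := by
  have hb : (b : ℂ) ≠ 0 := Nat.cast_ne_zero.2 (NeZero.ne b)
  rw [idft]
  have expand : ∀ k : ZMod b,
      (dft b sT k * conj (dft b s1 k) * conj (dft b s2 k))
        * Complex.exp (2 * Real.pi * Complex.I * ((t.val : ℂ) * k.val) / b)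
      = ∑ v : ZMod b, ∑ u : ZMod b, ∑ a : ZMod b,
          sT a * conj (s1 u) * conj (s2 v)
            * Ee b (((t.val : ℤ) + u.val + v.val - a.val) * k.val) := by
    intro k
    rw [dft_eq, conj_dft_eq, conj_dft_eq, exp_pos_eq]
    simp only [Finset.sum_mul, Finset.mul_sum]
    refine Finset.sum_congr rfl fun v _ => Finset.sum_congr rfl fun u _ =>
      Finset.sum_congr rfl fun a _ => ?_
    calc sT a * Ee b (-((a.val:ℤ) * k.val)) * ((starRingEnd ℂ) (s1 u) * Ee b ((u.val:ℤ) * k.val))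
            * ((starRingEnd ℂ) (s2 v) * Ee b ((v.val:ℤ) * k.val))
            * Ee b ((t.val : ℤ) * k.val)
        = sT a * conj (s1 u) * conj (s2 v)
            * (Ee b (-((a.val:ℤ) * k.val)) * Ee b ((u.val:ℤ) * k.val)
              * Ee b ((v.val:ℤ) * k.val) * Ee b ((t.val:ℤ) * k.val)) := by ring
      _ = _ := by
          rw [Ee_add, Ee_add, Ee_add]
          congr 1
          ring
  calc (∑ k : ZMod b, (fun k => dft b sT k * conj (dft b s1 k) * conj (dft b s2 k)) k
          * Complex.exp (2 * Real.pi * Complex.I * ((t.val : ℂ) * k.val) / b)) / b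
      = (∑ k : ZMod b, ∑ v : ZMod b, ∑ u : ZMod b, ∑ a : ZMod b,
          sT a * conj (s1 u) * conj (s2 v)
            * Ee b (((t.val : ℤ) + u.val + v.val - a.val) * k.val)) / b := by
        rw [Finset.sum_congr rfl fun k _ => expand k]
    _ = (∑ v : ZMod b, ∑ u : ZMod b, ∑ a : ZMod b,
          sT a * conj (s1 u) * conj (s2 v)
            * ∑ k : ZMod b, Ee b (((t.val : ℤ) + u.val + v.val - a.val) * k.val)) / b := by
        rw [Finset.sum_comm]
        congr 1
        refine Finset.sum_congr rfl fun v _ => ?_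
        rw [Finset.sum_comm]
        refine Finset.sum_congr rfl fun u _ => ?_
        rw [Finset.sum_comm]
        refine Finset.sum_congr rfl fun a _ => ?_
        rw [Finset.mul_sum]
    _ = (∑ v : ZMod b, ∑ u : ZMod b, ∑ a : ZMod b,
          (if a = t + u + v then sT a * conj (s1 u) * conj (s2 v) * b else 0)) / b := by
        congr 1
        refine Finset.sum_congr rfl fun v _ => Finset.sum_congr rfl fun u _ =>
          Finset.sum_congr rfl fun a _ => ?_
        rw [ortho]
        have hcond : (((t.val : ℤ) + u.val + v.val - a.val : ℤ) : ZMod b) = 0 ↔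
            a = t + u + v := by
          push_cast [ZMod.natCast_val, ZMod.cast_id]
          constructor
          · intro h; linear_combination -h
          · intro h; linear_combination -h
        by_cases h : a = t + u + v
        · rw [if_pos (hcond.2 h), if_pos h]
        · rw [if_neg (fun hc => h (hcond.1 hc)), if_neg h, mul_zero]
    _ = ∑ v : ZMod b, ∑ u : ZMod b, sT (t + u + v) * conj (s1 u) * conj (s2 v) := by
        rw [Finset.sum_div]
        refine Finset.sum_congr rfl fun v _ => ?_
        rw [Finset.sum_div]
        refine Finset.sum_congr rfl fun u _ => ?_
        rw [Finset.sum_ite_eq' Finset.univ (t + u + v)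
          (fun a => sT a * conj (s1 u) * conj (s2 v) * b)]
        simp [hb, mul_div_assoc, mul_div_cancel_right₀]
    _ = ∑ u : ZMod b, ∑ v : ZMod b, sT (t + u + v) * conj (s1 u) * conj (s2 v) := by
        rw [Finset.sum_comm]


/-- Proposition 1 (shifting identity):
⟨s_T, s₁ * s₂ * s₃⟩ = ⟨F⁻¹(F(s_T) ∘ conj(F s₁) ∘ conj(F s₂)), s₃⟩,
with ⟨u,v⟩ = ∑ u_i conj(v_i). -/
theorem stmt5 (b : ℕ) [NeZero b] (sT s1 s2 s3 : ZMod b → ℂ) :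
    (∑ t : ZMod b, sT t * conj (cconv b (cconv b s1 s2) s3 t))
      = ∑ t : ZMod b,
          idft b (fun k => dft b sT k * conj (dft b s1 k) * conj (dft b s2 k)) t
            * conj (s3 t) := by
  have L : (∑ t : ZMod b, sT t * conj (cconv b (cconv b s1 s2) s3 t))
      = ∑ p : ZMod b × ZMod b × ZMod b,
          sT p.1 * conj (s1 p.2.2) * conj (s2 (p.2.1 - p.2.2)) * conj (s3 (p.1 - p.2.1)) := by
    rw [Fintype.sum_prod_type]
    refine Finset.sum_congr rfl fun t _ => ?_
    rw [Fintype.sum_prod_type]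
    rw [cconv, map_sum, Finset.mul_sum]
    refine Finset.sum_congr rfl fun i _ => ?_
    rw [cconv, map_mul, map_sum, Finset.sum_mul, Finset.mul_sum]
    refine Finset.sum_congr rfl fun j _ => ?_
    rw [map_mul]
    ring
  have R : (∑ t : ZMod b,
        idft b (fun k => dft b sT k * conj (dft b s1 k) * conj (dft b s2 k)) t
          * conj (s3 t))
      = ∑ p : ZMod b × ZMod b × ZMod b,
          sT (p.1 + p.2.1 + p.2.2) * conj (s1 p.2.1) * conj (s2 p.2.2) * conj (s3 p.1) := by
    rw [Fintype.sum_prod_type]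
    refine Finset.sum_congr rfl fun t _ => ?_
    rw [idft_eq, Fintype.sum_prod_type, Finset.sum_mul]
    refine Finset.sum_congr rfl fun u _ => ?_
    rw [Finset.sum_mul]
  rw [L, R]
  refine Fintype.sum_equiv
    ⟨fun p => (p.1 - p.2.1, p.2.2, p.2.1 - p.2.2),
     fun q => (q.1 + q.2.1 + q.2.2, q.2.1 + q.2.2, q.2.1), ?_, ?_⟩ _ _ ?_
  · intro p; obtain ⟨t, i, j⟩ := p
    simp only [Prod.mk.injEq]
    exact ⟨by ring, by ring, trivial⟩
  · intro q; obtain ⟨w, u, v⟩ := q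
    simp only [Prod.mk.injEq]
    exact ⟨by ring, trivial, by ring⟩
  · intro p; obtain ⟨t, i, j⟩ := p
    simp only [Equiv.coe_fn_mk]
    have h1 : t - i + j + (i - j) = t := by ring
    have h2 : t - i = t - i := rfl
    rw [h1]
end

section
/- Let A, B ∈ ℝ^{n×...×n} (p-th order tensors) with symmetric tensor sketches s_A(t) = Σ_{H(i_1,...,i_p)=t} σ(i_1)···σ(i_p) A_{i_1,...,i_p} and s_B̃(t) = Σ_{H(i_1,...,i_p)=t, i_1≤...≤i_p} σ(i_1)···σ(i_p) B_{i_1,...,i_p}, where H(i_1,...,i_p) = (h(i_1)+...+h(i_p)) mod b, h is 2-wise independent (as a symmetric hash H), σ(i) are i.i.d. uniform over 4th roots of unity (p ≤ 3), and h, σ are independent. If A, B are symmetric tensors, then E[⟨s_A, s_B̃⟩] = ⟨A, B⟩. -/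
open Finset ComplexConjugate
open scoped Classical

lemma root4_iff (z : ℂ) : z ^ 4 = 1 ↔ z ∈ ({1, -1, Complex.I, -Complex.I} : Finset ℂ) := by
  have h : z ^ 4 - 1 = (z - 1) * (z + 1) * (z - Complex.I) * (z + Complex.I) := by
    ring_nf
    rw [Complex.I_sq]
    ring
  constructor
  · intro hz
    have h0 : (z - 1) * (z + 1) * (z - Complex.I) * (z + Complex.I) = 0 := by
      rw [← h, hz]; ring
    simp only [mem_insert, mem_singleton]
    rcases mul_eq_zero.1 h0 with h1 | h1
    · rcases mul_eq_zero.1 h1 with h2 | h2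
      · rcases mul_eq_zero.1 h2 with h3 | h3
        · left; linear_combination h3
        · right; left; linear_combination h3
      · right; right; left; linear_combination h2
    · right; right; right; linear_combination h1
  · intro hz
    simp only [mem_insert, mem_singleton] at hz
    rcases hz with rfl | rfl | rfl | rfl <;> norm_num [pow_succ, Complex.I_mul_I]

lemma sumR (a c : ℕ) (ha : a ≤ 3) (hc : c ≤ 3) :
    ∑ z ∈ ({1, -1, Complex.I, -Complex.I} : Finset ℂ), z ^ a * (conj z) ^ c
      = if a = c then 4 else 0 := by
  rw [sum_insert (by norm_num [Complex.ext_iff]), sum_insert (by norm_num [Complex.ext_iff]),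
    sum_insert (by norm_num [Complex.ext_iff]), sum_singleton]
  interval_cases a <;> interval_cases c <;>
    norm_num [pow_succ, Complex.ext_iff, Complex.I_mul_I]

lemma ofFn_eq_map {p n : ℕ} (l : Fin p → Fin n) :
    (Multiset.ofList (List.ofFn l)) = Multiset.map l Finset.univ.val := by
  rw [List.ofFn_eq_map]
  simp [Finset.univ, Fintype.elems, List.finRange]

lemma count_tuple {p n : ℕ} (l : Fin p → Fin n) (i : Fin n) :
    (Multiset.ofList (List.ofFn l)).count i
      = (Finset.univ.filter (fun j => l j = i)).card := by
  rw [ofFn_eq_map, Multiset.count_map]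
  simp [Finset.card, Finset.filter_val, eq_comm]

lemma prod_tuple {p n : ℕ} (l : Fin p → Fin n) (g : Fin n → ℂ) :
    (∏ j, g (l j)) = ∏ i, g i ^ (Finset.univ.filter (fun j => l j = i)).card := by
  rw [← Finset.prod_fiberwise Finset.univ l (fun j => g (l j))]
  refine Finset.prod_congr rfl fun i _ => ?_
  have hc : ∀ j ∈ Finset.univ.filter (fun j => l j = i), g (l j) = g i := by
    intro j hj; simp only [Finset.mem_filter] at hj; rw [hj.2]
  rw [Finset.prod_congr rfl hc, Finset.prod_const]

lemma hashsum_eq {p n b : ℕ} [NeZero b] (f : Fin n → ZMod b) (l l' : Fin p → Fin n)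
    (hm : Multiset.ofList (List.ofFn l) = Multiset.ofList (List.ofFn l')) :
    (∑ j, f (l j)) = ∑ j, f (l' j) := by
  have : (Multiset.map f (Multiset.map l Finset.univ.val)).sum
       = (Multiset.map f (Multiset.map l' Finset.univ.val)).sum := by
    rw [← ofFn_eq_map, ← ofFn_eq_map, hm]
  simpa [Multiset.map_map, Finset.sum, Function.comp_def] using this

lemma mono_unique {p n : ℕ} (l l' : Fin p → Fin n) (h1 : Monotone l) (h2 : Monotone l')
    (hm : Multiset.ofList (List.ofFn l) = Multiset.ofList (List.ofFn l')) : l = l' := by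
  have hperm : List.Perm (List.ofFn l) (List.ofFn l') := Multiset.coe_eq_coe.1 hm
  have := List.Perm.eq_of_sortedLE h1.sortedLE_ofFn h2.sortedLE_ofFn hperm
  exact List.ofFn_injective this

lemma ofFn_comp_perm {p n : ℕ} (l : Fin p → Fin n) (π : Equiv.Perm (Fin p)) :
    Multiset.ofList (List.ofFn (l ∘ π)) = Multiset.ofList (List.ofFn l) := by
  rw [ofFn_eq_map, ofFn_eq_map]
  have hm : Multiset.map (⇑π) Finset.univ.val = Finset.univ.val := by
    calc Multiset.map (⇑π) Finset.univ.val
        = (Finset.map π.toEmbedding Finset.univ).val := by rw [Finset.map_val]; rfl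
      _ = Finset.univ.val := by rw [Finset.map_univ_equiv]
  calc Multiset.map (l ∘ π) Finset.univ.val
      = Multiset.map l (Multiset.map (⇑π) Finset.univ.val) := by rw [Multiset.map_map]
    _ = _ := by rw [hm]

/-- The symmetric tensor sketch s_A of a p-th order tensor A on [n]^p, with hash
`hh : [n] → ZMod b` (symmetric hash H(l) = ∑_j h(l_j)) and complex signs `sg`. -/
noncomputable def symSketch (p n b : ℕ) [NeZero b]
    (hh : Fin n → ZMod b) (sg : Fin n → ℂ)
    (A : (Fin p → Fin n) → ℝ) (t : ZMod b) : ℂ :=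
  ∑ l ∈ Finset.univ.filter (fun l : Fin p → Fin n => (∑ j, hh (l j)) = t),
    (∏ j, sg (l j)) * (A l : ℂ)

/-- The sketch of the upper-triangular restriction B̃ of B (only sorted tuples). -/
noncomputable def symSketchTri (p n b : ℕ) [NeZero b]
    (hh : Fin n → ZMod b) (sg : Fin n → ℂ)
    (B : (Fin p → Fin n) → ℝ) (t : ZMod b) : ℂ :=
  ∑ l ∈ Finset.univ.filter
      (fun l : Fin p → Fin n => (∑ j, hh (l j)) = t ∧ Monotone l),
    (∏ j, sg (l j)) * (B l : ℂ)

/-- Unbiasedness of symmetric tensor sketches (Lemma: E⟨s_A, s_B̃⟩ = ⟨A,B⟩),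
for symmetric p-th order tensors A, B (p ≤ 3), where σ is i.i.d. uniform over
the 4th roots of unity and independent of the hash h, and the symmetric hash H
is 2-wise independent.  The probability space is a finite weighted space (Ω, w). -/
theorem stmt9
    (p n b : ℕ) (hp : p ≤ 3) (hp0 : 0 < p) [NeZero b] (hn : 0 < n)
    (Ω : Type*) [Fintype Ω] (w : Ω → ℝ)
    (hw0 : ∀ ω, 0 ≤ w ω) (hw1 : ∑ ω, w ω = 1)
    (h : Ω → Fin n → ZMod b) (σ : Ω → Fin n → ℂ)
    -- σ is i.i.d. uniform over the 4th roots of unity and independent of h: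
    (hσ : ∀ (g : Fin n → ℂ) (S : Set (Fin n → ZMod b)),
        (∑ ω ∈ Finset.univ.filter (fun ω => σ ω = g ∧ h ω ∈ S), w ω)
          = (if ∀ i, (g i) ^ 4 = 1 then ((1 : ℝ) / 4) ^ n else 0)
              * ∑ ω ∈ Finset.univ.filter (fun ω => h ω ∈ S), w ω)
    -- the symmetric hash H is 2-wise independent:
    (hH : ∀ (l l' : Fin p → Fin n),
        Multiset.ofList (List.ofFn l) ≠ Multiset.ofList (List.ofFn l') →
        ∀ t t' : ZMod b,
          (∑ ω ∈ Finset.univ.filter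
              (fun ω => (∑ j, h ω (l j)) = t ∧ (∑ j, h ω (l' j)) = t'), w ω)
            = 1 / (b : ℝ) ^ 2)
    (A B : (Fin p → Fin n) → ℝ)
    (hA : ∀ (l : Fin p → Fin n) (π : Equiv.Perm (Fin p)), A (l ∘ π) = A l)
    (hB : ∀ (l : Fin p → Fin n) (π : Equiv.Perm (Fin p)), B (l ∘ π) = B l) :
    (∑ ω, (w ω : ℂ) *
        ∑ t : ZMod b,
          symSketch p n b (h ω) (σ ω) A t * conj (symSketchTri p n b (h ω) (σ ω) B t))
      = ∑ l : Fin p → Fin n, (A l : ℂ) * (B l : ℂ) := by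
  classical
  set R : Finset ℂ := {1, -1, Complex.I, -Complex.I} with hR
  set V : Finset (Fin n → ℂ) := Fintype.piFinset (fun _ => R) with hVdef
  -- Step A: invalid sign configurations have zero weight
  have hwz : ∀ ω : Ω, ¬ (∀ i, (σ ω i) ^ 4 = 1) → w ω = 0 := by
    intro ω hbad
    have h0 := hσ (σ ω) Set.univ
    rw [if_neg hbad, zero_mul] at h0
    exact (Finset.sum_eq_zero_iff_of_nonneg (fun ω' _ => hw0 ω')).1 h0 ω (by simp)
  -- Step B: independence / conditioning identity
  have key : ∀ (S : Set (Fin n → ZMod b)) (Fc : (Fin n → ℂ) → ℂ),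
      (∑ ω ∈ Finset.univ.filter (fun ω => h ω ∈ S), (w ω : ℂ) * Fc (σ ω))
        = ((1/4 : ℂ) ^ n * ∑ g ∈ V, Fc g)
            * ((∑ ω ∈ Finset.univ.filter (fun ω => h ω ∈ S), w ω : ℝ) : ℂ) := by
    intro S Fc
    have hVmem : ∀ g : Fin n → ℂ, g ∈ V ↔ ∀ i, (g i) ^ 4 = 1 := by
      intro g
      rw [hVdef, Fintype.mem_piFinset]
      exact (forall_congr' fun i => (root4_iff _)).symm
    have hsplit :
        (∑ ω ∈ Finset.univ.filter (fun ω => h ω ∈ S), (w ω : ℂ) * Fc (σ ω))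
          = ∑ ω ∈ (Finset.univ.filter (fun ω => h ω ∈ S)).filter (fun ω => σ ω ∈ V),
              (w ω : ℂ) * Fc (σ ω) := by
      rw [← Finset.sum_filter_add_sum_filter_not (Finset.univ.filter (fun ω => h ω ∈ S))
          (fun ω => σ ω ∈ V) (fun ω => (w ω : ℂ) * Fc (σ ω))]
      have hz : ∑ ω ∈ (Finset.univ.filter (fun ω => h ω ∈ S)).filter (fun ω => ¬ σ ω ∈ V),
          (w ω : ℂ) * Fc (σ ω) = 0 := by
        refine Finset.sum_eq_zero fun ω hω => ?_
        simp only [Finset.mem_filter] at hω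
        have : w ω = 0 := hwz ω (fun hall => hω.2 ((hVmem _).2 hall))
        simp [this]
      rw [hz, add_zero]
    rw [hsplit,
      ← Finset.sum_fiberwise_of_maps_to (g := σ) (t := V)
        (fun ω hω => (Finset.mem_filter.1 hω).2)]
    have hfib : ∀ g ∈ V,
        (∑ ω ∈ ((Finset.univ.filter (fun ω => h ω ∈ S)).filter
            (fun ω => σ ω ∈ V)).filter (fun ω => σ ω = g),
            (w ω : ℂ) * Fc (σ ω))
          = Fc g * ((1/4 : ℂ) ^ n
              * ((∑ ω ∈ Finset.univ.filter (fun ω => h ω ∈ S), w ω : ℝ) : ℂ)) := by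
      intro g hg
      have hset : ((Finset.univ.filter (fun ω => h ω ∈ S)).filter
            (fun ω => σ ω ∈ V)).filter (fun ω => σ ω = g)
          = Finset.univ.filter (fun ω => σ ω = g ∧ h ω ∈ S) := by
        ext ω
        simp only [Finset.mem_filter, Finset.mem_univ, true_and]
        constructor
        · rintro ⟨⟨hS, _⟩, hgg⟩; exact ⟨hgg, hS⟩
        · rintro ⟨hgg, hS⟩; exact ⟨⟨hS, hgg ▸ hg⟩, hgg⟩
      have hcongr : ∀ ω ∈ Finset.univ.filter (fun ω => σ ω = g ∧ h ω ∈ S),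
          (w ω : ℂ) * Fc (σ ω) = (w ω : ℂ) * Fc g := by
        intro ω hω
        rw [(Finset.mem_filter.1 hω).2.1]
      rw [hset, Finset.sum_congr rfl hcongr, ← Finset.sum_mul]
      have hcast : (∑ ω ∈ Finset.univ.filter (fun ω => σ ω = g ∧ h ω ∈ S), (w ω : ℂ))
          = ((∑ ω ∈ Finset.univ.filter (fun ω => σ ω = g ∧ h ω ∈ S), w ω : ℝ) : ℂ) := by
        push_cast; ring
      rw [hcast, hσ g S, if_pos ((hVmem g).1 hg)]
      push_cast
      ring
    rw [Finset.sum_congr rfl hfib, ← Finset.sum_mul]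
    ring
  -- Step C: expectation over signs
  have hcard_le : ∀ (l : Fin p → Fin n) (i : Fin n),
      (Finset.univ.filter (fun j => l j = i)).card ≤ 3 := by
    intro l i
    calc (Finset.univ.filter (fun j => l j = i)).card
        ≤ (Finset.univ : Finset (Fin p)).card := Finset.card_filter_le _ _
      _ = p := by simp
      _ ≤ 3 := hp
  have hEσ : ∀ l l' : Fin p → Fin n,
      (1/4 : ℂ) ^ n * ∑ g ∈ V, (∏ j, g (l j)) * ∏ j, conj (g (l' j))
        = if Multiset.ofList (List.ofFn l) = Multiset.ofList (List.ofFn l')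
            then 1 else 0 := by
    intro l l'
    have hprod : ∀ g : Fin n → ℂ, (∏ j, g (l j)) * ∏ j, conj (g (l' j))
        = ∏ i, (g i) ^ (Finset.univ.filter (fun j => l j = i)).card
            * (conj (g i)) ^ (Finset.univ.filter (fun j => l' j = i)).card := by
      intro g
      rw [prod_tuple l g, prod_tuple l' (fun i => conj (g i)), ← Finset.prod_mul_distrib]
    rw [Finset.sum_congr rfl (fun g _ => hprod g), hVdef]
    rw [← Finset.prod_univ_sum (fun _ => R)
      (fun i z => z ^ (Finset.univ.filter (fun j => l j = i)).card
        * (conj z) ^ (Finset.univ.filter (fun j => l' j = i)).card)]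
    have h14 : (1/4 : ℂ) ^ n = ∏ _i : Fin n, (1/4 : ℂ) := by simp
    rw [h14, ← Finset.prod_mul_distrib]
    have hfac : ∀ i : Fin n,
        (1/4 : ℂ) * ∑ z ∈ R, z ^ (Finset.univ.filter (fun j => l j = i)).card
            * (conj z) ^ (Finset.univ.filter (fun j => l' j = i)).card
          = if (Finset.univ.filter (fun j => l j = i)).card
              = (Finset.univ.filter (fun j => l' j = i)).card then 1 else 0 := by
      intro i
      rw [hR, sumR _ _ (hcard_le l i) (hcard_le l' i)]
      split <;> norm_num
    rw [Finset.prod_congr rfl (fun i _ => hfac i)]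
    by_cases hm : Multiset.ofList (List.ofFn l) = Multiset.ofList (List.ofFn l')
    · rw [if_pos hm]
      have hcnt : ∀ i : Fin n, (Finset.univ.filter (fun j => l j = i)).card
          = (Finset.univ.filter (fun j => l' j = i)).card := by
        intro i; rw [← count_tuple, ← count_tuple, hm]
      rw [Finset.prod_congr rfl (fun i _ => by rw [if_pos (hcnt i)])]
      simp
    · rw [if_neg hm]
      have hex : ∃ i : Fin n, (Finset.univ.filter (fun j => l j = i)).card
          ≠ (Finset.univ.filter (fun j => l' j = i)).card := by
        by_contra hall
        push_neg at hall
        exact hm (Multiset.ext.2 fun i => by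
          rw [count_tuple, count_tuple]; exact hall i)
      obtain ⟨i, hi⟩ := hex
      exact Finset.prod_eq_zero (Finset.mem_univ i) (if_neg hi)
  -- Step D: the per-pair expectation
  have hE : ∀ l l' : Fin p → Fin n,
      (∑ ω, (w ω : ℂ) * ((∏ j, σ ω (l j)) * (∏ j, conj (σ ω (l' j)))
          * (if (∑ j, h ω (l j)) = (∑ j, h ω (l' j)) then 1 else 0)))
        = if Multiset.ofList (List.ofFn l) = Multiset.ofList (List.ofFn l')
            then 1 else 0 := by
    intro l l'
    have hk := key {f : Fin n → ZMod b | (∑ j, f (l j)) = ∑ j, f (l' j)}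
      (fun g => (∏ j, g (l j)) * ∏ j, conj (g (l' j)))
    have hrw : ∀ inst : DecidablePred
        (fun ω : Ω => h ω ∈ {f : Fin n → ZMod b | (∑ j, f (l j)) = ∑ j, f (l' j)}),
        (∑ ω, (w ω : ℂ) * ((∏ j, σ ω (l j)) * (∏ j, conj (σ ω (l' j)))
            * (if (∑ j, h ω (l j)) = (∑ j, h ω (l' j)) then 1 else 0)))
          = ∑ ω ∈ @Finset.filter _ _ inst Finset.univ,
              (w ω : ℂ) * ((∏ j, σ ω (l j)) * ∏ j, conj (σ ω (l' j))) := by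
      intro inst
      rw [Finset.sum_filter]
      refine Finset.sum_congr rfl fun ω _ => ?_
      simp only [Set.mem_setOf_eq]
      by_cases hc : (∑ j, h ω (l j)) = (∑ j, h ω (l' j))
      · simp [hc]
      · simp [hc]
    refine ((hrw _).trans hk).trans ?_
    rw [hEσ l l']
    have hfull : ∀ inst : DecidablePred
        (fun ω : Ω => h ω ∈ {f : Fin n → ZMod b | (∑ j, f (l j)) = ∑ j, f (l' j)}),
        Multiset.ofList (List.ofFn l) = Multiset.ofList (List.ofFn l') →
        (∑ ω ∈ @Finset.filter _ _ inst Finset.univ, w ω) = 1 := by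
      intro inst hm
      have h1 : (@Finset.filter _ _ inst Finset.univ) = Finset.univ :=
        Finset.filter_true_of_mem (fun ω _ => hashsum_eq (h ω) l l' hm)
      rw [h1, hw1]
    by_cases hm : Multiset.ofList (List.ofFn l) = Multiset.ofList (List.ofFn l')
    · rw [if_pos hm, one_mul, hfull _ hm]
      norm_num
    · rw [if_neg hm, zero_mul]
  -- Step E: main computation
  have step1 : (∑ ω, (w ω : ℂ) *
        ∑ t : ZMod b,
          symSketch p n b (h ω) (σ ω) A t * conj (symSketchTri p n b (h ω) (σ ω) B t))
      = ∑ ω, ∑ l : Fin p → Fin n, ∑ l' : Fin p → Fin n,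
          (if Monotone l' then (A l : ℂ) * (B l' : ℂ) *
            ((w ω : ℂ) * ((∏ j, σ ω (l j)) * (∏ j, conj (σ ω (l' j))) *
              (if (∑ j, h ω (l j)) = (∑ j, h ω (l' j)) then 1 else 0))) else 0) := by
    refine Finset.sum_congr rfl fun ω _ => ?_
    simp only [symSketch, symSketchTri, map_sum]
    simp only [map_mul, map_prod, Complex.conj_ofReal]
    simp only [Finset.sum_filter, apply_ite (starRingEnd ℂ), map_zero]
    simp only [Finset.sum_mul_sum]
    simp only [Finset.mul_sum]
    rw [Finset.sum_comm]
    refine Finset.sum_congr rfl fun l _ => ?_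
    rw [Finset.sum_comm]
    refine Finset.sum_congr rfl fun l' _ => ?_
    rw [Finset.sum_eq_single (∑ j, h ω (l j))]
    · by_cases hmono : Monotone l'
      · by_cases heq : (∑ j, h ω (l' j)) = (∑ j, h ω (l j))
        · simp only [if_pos rfl, if_pos (And.intro heq hmono), if_pos hmono, if_pos heq.symm,
            if_true, mul_one]
          ring
        · simp only [if_pos rfl, if_neg (fun hc : _ ∧ _ => heq hc.1), if_pos hmono,
            if_neg (fun hc => heq (Eq.symm hc)), if_true, mul_one, mul_zero]
      · simp only [if_neg hmono, if_neg (fun hc : _ ∧ Monotone l' => hmono hc.2)]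
        ring
    · intro t _ ht
      simp only [if_neg (Ne.symm ht)]
      ring
    · intro hmem
      exact absurd (Finset.mem_univ _) hmem
  have step2 : (∑ ω, ∑ l : Fin p → Fin n, ∑ l' : Fin p → Fin n,
          (if Monotone l' then (A l : ℂ) * (B l' : ℂ) *
            ((w ω : ℂ) * ((∏ j, σ ω (l j)) * (∏ j, conj (σ ω (l' j))) *
              (if (∑ j, h ω (l j)) = (∑ j, h ω (l' j)) then 1 else 0))) else 0))
      = ∑ l : Fin p → Fin n, ∑ l' : Fin p → Fin n,
          (if Monotone l' then (A l : ℂ) * (B l' : ℂ) *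
            (if Multiset.ofList (List.ofFn l) = Multiset.ofList (List.ofFn l')
              then 1 else 0) else 0) := by
    rw [Finset.sum_comm]
    refine Finset.sum_congr rfl fun l _ => ?_
    rw [Finset.sum_comm]
    refine Finset.sum_congr rfl fun l' _ => ?_
    by_cases hmono : Monotone l'
    · simp only [if_pos hmono, ← Finset.mul_sum]
      rw [hE l l']
    · simp [hmono]
  have step3 : (∑ l : Fin p → Fin n, ∑ l' : Fin p → Fin n,
          (if Monotone l' then (A l : ℂ) * (B l' : ℂ) *
            (if Multiset.ofList (List.ofFn l) = Multiset.ofList (List.ofFn l')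
              then 1 else 0) else 0))
      = ∑ l : Fin p → Fin n, (A l : ℂ) * (B l : ℂ) := by
    refine Finset.sum_congr rfl fun l _ => ?_
    rw [Finset.sum_eq_single (l ∘ Tuple.sort l)]
    · rw [if_pos (Tuple.monotone_sort l), if_pos (ofFn_comp_perm l (Tuple.sort l)).symm,
        mul_one, hB l (Tuple.sort l)]
    · intro l' _ hne
      by_cases hmono : Monotone l'
      · rw [if_pos hmono]
        have hm : ¬ (Multiset.ofList (List.ofFn l) = Multiset.ofList (List.ofFn l')) := by
          intro hm
          exact hne (mono_unique l' (l ∘ Tuple.sort l) hmono (Tuple.monotone_sort l)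
            (by rw [← hm, ofFn_comp_perm]))
        rw [if_neg hm, mul_zero]
      · rw [if_neg hmono]
    · intro hmem
      exact absurd (Finset.mem_univ _) hmem
  rw [step1, step2, step3]
end
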